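/- arXiv:2510.20917 — 3 statements merged into one kernel-verified Lean document; each statement's English description precedes it below -/
import Mathlib

section
/- If y is feasible for the relaxed (inequality-constrained) hanging chain problem and satisfies the spanning constraint strictly (Σ sqrt(ℓ_i^2 - y_i^2) > d), then y is not optimal: there exists a feasible ŷ with strictly smaller objective value. -/
theorem slack_implies_not_optimal (n : ℕ) (hn : 2 ≤ n) (m ℓ : Fin n → ℝ)
    (hm : ∀ i, 0 < m i) (hℓ : ∀ i, 0 < ℓ i) (d : ℝ)
    (hd₁ : ∀ i, ℓ i < d) (hd₂ : d < ∑ i, ℓ i) (c : Fin n → ℝ)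
    (hc : ∀ i, c i = m i / 2 + ∑ j ∈ Finset.univ.filter (fun j => i < j), m j)
    (y : Fin n → ℝ) (hy₁ : (∑ i, y i) = 0) (hy₂ : ∀ i, |y i| ≤ ℓ i)
    (hy₃ : d < ∑ i, Real.sqrt (ℓ i ^ 2 - y i ^ 2)) :
    ∃ yhat : Fin n → ℝ, (∑ i, yhat i) = 0 ∧ (∀ i, |yhat i| ≤ ℓ i) ∧
      d ≤ (∑ i, Real.sqrt (ℓ i ^ 2 - yhat i ^ 2)) ∧
      (∑ i, c i * yhat i) < ∑ i, c i * y i := by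
  classical
  have hn0 : 0 < n := by omega
  set i0 : Fin n := ⟨0, hn0⟩
  have hdpos : (0:ℝ) < d := lt_trans (hℓ i0) (hd₁ i0)
  set S := Finset.univ.filter (fun i => |y i| < ℓ i) with hS
  -- sum of sqrt terms is supported on S
  have hsum_eq : ∑ i, Real.sqrt (ℓ i ^ 2 - y i ^ 2)
      = ∑ i ∈ S, Real.sqrt (ℓ i ^ 2 - y i ^ 2) := by
    rw [← Finset.sum_filter_add_sum_filter_not Finset.univ (fun i => |y i| < ℓ i)
      (fun i => Real.sqrt (ℓ i ^ 2 - y i ^ 2))]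
    have h0 : ∑ i ∈ Finset.univ.filter (fun i => ¬ |y i| < ℓ i),
        Real.sqrt (ℓ i ^ 2 - y i ^ 2) = 0 := by
      apply Finset.sum_eq_zero
      intro i hi
      simp only [Finset.mem_filter] at hi
      have h1 : |y i| = ℓ i := le_antisymm (hy₂ i) (not_lt.mp hi.2)
      have h2 : y i ^ 2 = ℓ i ^ 2 := by rw [← sq_abs, h1]
      rw [h2, sub_self, Real.sqrt_zero]
    rw [h0, add_zero]
  have hterm_le : ∀ i : Fin n, Real.sqrt (ℓ i ^ 2 - y i ^ 2) ≤ ℓ i := by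
    intro i
    calc Real.sqrt (ℓ i ^ 2 - y i ^ 2) ≤ Real.sqrt (ℓ i ^ 2) :=
          Real.sqrt_le_sqrt (by nlinarith [sq_nonneg (y i)])
      _ = ℓ i := by rw [Real.sqrt_sq (hℓ i).le]
  have hcard : 1 < S.card := by
    by_contra h
    push_neg at h
    rcases S.eq_empty_or_nonempty with he | ⟨a, ha⟩
    · rw [hsum_eq, he, Finset.sum_empty] at hy₃; linarith
    · have hsub : S ⊆ {a} := by
        intro x hx
        simp only [Finset.mem_singleton]
        exact Finset.card_le_one.mp h x hx a ha
      have hle : ∑ i ∈ S, Real.sqrt (ℓ i ^ 2 - y i ^ 2)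
          ≤ ∑ i ∈ {a}, Real.sqrt (ℓ i ^ 2 - y i ^ 2) :=
        Finset.sum_le_sum_of_subset_of_nonneg hsub (fun j _ _ => Real.sqrt_nonneg _)
      rw [Finset.sum_singleton] at hle
      have := hd₁ a
      rw [hsum_eq] at hy₃
      have := hterm_le a
      linarith
  obtain ⟨a, ha, b, hb, hab⟩ := Finset.one_lt_card.mp hcard
  obtain ⟨p, q, hpq, hp, hq⟩ : ∃ p q : Fin n, p < q ∧ |y p| < ℓ p ∧ |y q| < ℓ q := by
    rcases lt_or_gt_of_ne hab with h | h
    · exact ⟨a, b, h, (Finset.mem_filter.mp ha).2, (Finset.mem_filter.mp hb).2⟩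
    · exact ⟨b, a, h, (Finset.mem_filter.mp hb).2, (Finset.mem_filter.mp ha).2⟩
  have hpq' : p ≠ q := ne_of_lt hpq
  -- c is strictly decreasing
  have hcq : c q < c p := by
    rw [hc p, hc q]
    have hsub : insert q (Finset.univ.filter (fun j => q < j))
        ⊆ Finset.univ.filter (fun j => p < j) := by
      intro j hj
      simp only [Finset.mem_insert, Finset.mem_filter, Finset.mem_univ, true_and] at hj ⊢
      rcases hj with rfl | hj
      · exact hpq
      · exact lt_trans hpq hj
    have hle := Finset.sum_le_sum_of_subset_of_nonneg hsub (fun j _ _ => (hm j).le)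
    rw [Finset.sum_insert (by simp)] at hle
    have := hm p; have := hm q
    linarith
  -- the perturbation direction
  set v : Fin n → ℝ := fun i => (if i = q then 1 else 0) - (if i = p then 1 else 0) with hv
  have hvsum : ∑ i, v i = 0 := by
    simp [hv, Finset.sum_sub_distrib]
  have hvc : ∑ i, c i * v i = c q - c p := by
    simp [hv, mul_sub, Finset.sum_sub_distrib, mul_ite, mul_one, mul_zero]
  -- continuity gives room for a small perturbation
  have hg : Continuous (fun t : ℝ => ∑ i, Real.sqrt (ℓ i ^ 2 - (y i + t * v i) ^ 2)) := by
    apply continuous_finset_sum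
    intro i _
    exact Real.continuous_sqrt.comp (by continuity)
  have h0 : d < ∑ i, Real.sqrt (ℓ i ^ 2 - (y i + (0:ℝ) * v i) ^ 2) := by simpa using hy₃
  have hev : ∀ᶠ t in nhds (0:ℝ), d < ∑ i, Real.sqrt (ℓ i ^ 2 - (y i + t * v i) ^ 2) :=
    (hg.continuousAt (x := 0)).eventually_const_lt h0
  obtain ⟨ε, hε, hball⟩ := Metric.eventually_nhds_iff.mp hev
  set t : ℝ := min (ε / 2) (min (ℓ p - |y p|) (ℓ q - |y q|)) with ht
  have htpos : 0 < t := by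
    apply lt_min (by linarith)
    exact lt_min (by linarith) (by linarith)
  have htp : t ≤ ℓ p - |y p| := le_trans (min_le_right _ _) (min_le_left _ _)
  have htq : t ≤ ℓ q - |y q| := le_trans (min_le_right _ _) (min_le_right _ _)
  have htε : dist t 0 < ε := by
    rw [Real.dist_eq, sub_zero, abs_of_pos htpos]
    calc t ≤ ε / 2 := min_le_left _ _
      _ < ε := by linarith
  refine ⟨fun i => y i + t * v i, ?_, ?_, ?_, ?_⟩
  · rw [Finset.sum_add_distrib, hy₁, ← Finset.mul_sum, hvsum, mul_zero, add_zero]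
  · intro i
    show |y i + t * v i| ≤ ℓ i
    by_cases hiq : i = q
    · subst hiq
      have : v i = 1 := by simp [hv, (ne_of_lt hpq).symm]
      rw [this, mul_one]
      have := abs_add_le (y i) t
      rw [abs_of_pos htpos] at this
      linarith
    · by_cases hip : i = p
      · subst hip
        have : v i = -1 := by simp [hv, hiq]
        rw [this]
        have h1 : y i + t * (-1) = y i - t := by ring
        rw [h1]
        have := abs_sub (y i) t
        calc |y i - t| ≤ |y i| + |t| := abs_sub _ _
          _ = |y i| + t := by rw [abs_of_pos htpos]
          _ ≤ ℓ i := by linarith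
      · have : v i = 0 := by simp [hv, hip, hiq]
        rw [this, mul_zero, add_zero]
        exact hy₂ i
  · exact (hball htε).le
  · have : ∑ i, c i * (y i + t * v i) = (∑ i, c i * y i) + t * (c q - c p) := by
      rw [← hvc]
      rw [Finset.mul_sum, ← Finset.sum_add_distrib]
      congr 1; ext i; ring
    rw [this]
    nlinarith
end

section
/- Every optimal solution of the relaxed hanging chain problem satisfies the spanning constraint with equality: Σ sqrt(ℓ_i^2 - y_i^2) = d. -/
theorem optimal_implies_tight (n : ℕ) (hn : 2 ≤ n) (m ℓ : Fin n → ℝ)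
    (hm : ∀ i, 0 < m i) (hℓ : ∀ i, 0 < ℓ i) (d : ℝ)
    (hd₁ : ∀ i, ℓ i < d) (hd₂ : d < ∑ i, ℓ i) (c : Fin n → ℝ)
    (hc : ∀ i, c i = m i / 2 + ∑ j ∈ Finset.univ.filter (fun j => i < j), m j)
    (y : Fin n → ℝ) (hy₁ : (∑ i, y i) = 0) (hy₂ : ∀ i, |y i| ≤ ℓ i)
    (hy₃ : d ≤ ∑ i, Real.sqrt (ℓ i ^ 2 - y i ^ 2))
    (hopt : ∀ z : Fin n → ℝ, (∑ i, z i) = 0 → (∀ i, |z i| ≤ ℓ i) →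
      d ≤ (∑ i, Real.sqrt (ℓ i ^ 2 - z i ^ 2)) →
      (∑ i, c i * y i) ≤ ∑ i, c i * z i) :
    (∑ i, Real.sqrt (ℓ i ^ 2 - y i ^ 2)) = d := by
  by_contra hne
  have hS : d < ∑ i, Real.sqrt (ℓ i ^ 2 - y i ^ 2) := lt_of_le_of_ne hy₃ (Ne.symm hne)
  have i0 : Fin n := ⟨0, by omega⟩
  have hzero : ∀ k : Fin n, ¬ |y k| < ℓ k → Real.sqrt (ℓ k ^ 2 - y k ^ 2) = 0 := by
    intro k hk
    have h1 : ℓ k ≤ |y k| := not_lt.mp hk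
    have h2 : ℓ k ^ 2 - y k ^ 2 ≤ 0 := by nlinarith [abs_nonneg (y k), hℓ k, sq_abs (y k)]
    exact Real.sqrt_eq_zero_of_nonpos h2
  -- there exist two distinct strictly interior coordinates
  have hpair : ∃ i j : Fin n, i ≠ j ∧ |y i| < ℓ i ∧ |y j| < ℓ j := by
    by_contra hno
    push_neg at hno
    by_cases hex : ∃ k, |y k| < ℓ k
    · obtain ⟨k, hk⟩ := hex
      have hsum : (∑ i, Real.sqrt (ℓ i ^ 2 - y i ^ 2)) = Real.sqrt (ℓ k ^ 2 - y k ^ 2) := by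
        apply Finset.sum_eq_single_of_mem k (Finset.mem_univ k)
        intro b _ hbk
        exact hzero b (not_lt.mpr (hno k b (Ne.symm hbk) hk))
      have hle : Real.sqrt (ℓ k ^ 2 - y k ^ 2) ≤ ℓ k := by
        calc Real.sqrt (ℓ k ^ 2 - y k ^ 2) ≤ Real.sqrt (ℓ k ^ 2) :=
              Real.sqrt_le_sqrt (by nlinarith [sq_nonneg (y k)])
          _ = ℓ k := Real.sqrt_sq (hℓ k).le
      have := hd₁ k
      rw [hsum] at hy₃
      linarith
    · push_neg at hex
      have hz : (∑ i, Real.sqrt (ℓ i ^ 2 - y i ^ 2)) = 0 :=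
        Finset.sum_eq_zero (fun k _ => hzero k (not_lt.mpr (hex k)))
      have := hd₁ i0
      have := hℓ i0
      rw [hz] at hy₃
      linarith
  obtain ⟨a, b, hab, ha, hb⟩ := hpair
  -- order them so that i < j
  obtain ⟨i, j, hij, hi, hj⟩ : ∃ i j : Fin n, i < j ∧ |y i| < ℓ i ∧ |y j| < ℓ j := by
    rcases lt_or_gt_of_ne hab with h | h
    · exact ⟨a, b, h, ha, hb⟩
    · exact ⟨b, a, h, hb, ha⟩
  have hij' : i ≠ j := ne_of_lt hij
  -- c is strictly decreasing: c j < c i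
  have hcij : c j < c i := by
    have hsub : insert j (Finset.univ.filter (fun k => j < k)) ⊆
        Finset.univ.filter (fun k => i < k) := by
      intro k hk
      simp only [Finset.mem_insert, Finset.mem_filter, Finset.mem_univ, true_and] at *
      rcases hk with rfl | hk
      · exact hij
      · exact lt_trans hij hk
    have hle : (m j + ∑ k ∈ Finset.univ.filter (fun k => j < k), m k) ≤
        ∑ k ∈ Finset.univ.filter (fun k => i < k), m k := by
      rw [← Finset.sum_insert (by simp)]
      exact Finset.sum_le_sum_of_subset_of_nonneg hsub (fun k _ _ => (hm k).le)
    have hmi := hm i; have hmj := hm j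
    rw [hc i, hc j]
    linarith
  -- perturbation direction
    -- w j = 1, w i = -1, else 0
  set w : Fin n → ℝ := fun k => (if k = j then 1 else 0) - (if k = i then 1 else 0) with hw
  have hwsum : ∑ k, w k = 0 := by
    simp [hw, Finset.sum_sub_distrib]
  have hwcsum : ∑ k, c k * w k = c j - c i := by
    simp [hw, mul_sub, Finset.sum_sub_distrib, mul_ite, mul_one, mul_zero]
  have hgc : Continuous fun ε : ℝ => ∑ k, Real.sqrt (ℓ k ^ 2 - (y k + ε * w k) ^ 2) := by
    apply continuous_finset_sum
    intro k _
    exact Real.continuous_sqrt.comp (by continuity)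
  have h0 : (∑ k, Real.sqrt (ℓ k ^ 2 - (y k + (0:ℝ) * w k) ^ 2)) =
      ∑ k, Real.sqrt (ℓ k ^ 2 - y k ^ 2) := by simp
  have hev : ∀ᶠ ε : ℝ in nhds 0, d < ∑ k, Real.sqrt (ℓ k ^ 2 - (y k + ε * w k) ^ 2) := by
    have ht : Filter.Tendsto (fun ε : ℝ => ∑ k, Real.sqrt (ℓ k ^ 2 - (y k + ε * w k) ^ 2))
        (nhds 0) (nhds (∑ k, Real.sqrt (ℓ k ^ 2 - (y k + (0:ℝ) * w k) ^ 2))) :=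
      hgc.continuousAt
    rw [h0] at ht
    exact ht.eventually (eventually_gt_nhds hS)
  obtain ⟨δ, hδpos, hδ⟩ := Metric.eventually_nhds_iff.mp hev
  obtain ⟨hia, hib⟩ := abs_lt.mp hi
  obtain ⟨hja, hjb⟩ := abs_lt.mp hj
  set ε : ℝ := min (min (δ / 2) (ℓ i + y i)) (ℓ j - y j) with hε
  have hεpos : 0 < ε := by
    apply lt_min (lt_min (by linarith) (by linarith)) (by linarith)
  have hε1 : ε ≤ ℓ i + y i := le_trans (min_le_left _ _) (min_le_right _ _)
  have hε2 : ε ≤ ℓ j - y j := min_le_right _ _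
  have hεδ : ε < δ := lt_of_le_of_lt (le_trans (min_le_left _ _) (min_le_left _ _)) (by linarith)
  set z : Fin n → ℝ := fun k => y k + ε * w k with hzdef
  have hz1 : (∑ k, z k) = 0 := by
    simp [hzdef, Finset.sum_add_distrib, ← Finset.mul_sum, hwsum, hy₁]
  have hz2 : ∀ k, |z k| ≤ ℓ k := by
    intro k
    by_cases hki : k = i
    · subst hki
      have : z k = y k - ε := by simp [hzdef, hw, hij', sub_eq_add_neg]
      rw [this]
      rw [abs_le]
      constructor <;> linarith
    · by_cases hkj : k = j
      · subst hkj
        have : z k = y k + ε := by simp [hzdef, hw, Ne.symm hij']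
        rw [this]
        rw [abs_le]
        constructor <;> linarith
      · have : z k = y k := by simp [hzdef, hw, hki, hkj]
        rw [this]; exact hy₂ k
  have hz3 : d ≤ ∑ k, Real.sqrt (ℓ k ^ 2 - z k ^ 2) := by
    have : dist ε 0 < δ := by
      rw [Real.dist_eq, sub_zero, abs_of_pos hεpos]; exact hεδ
    exact (hδ this).le
  have hle := hopt z hz1 hz2 hz3
  have hzc : ∑ k, c k * z k = (∑ k, c k * y k) + ε * (c j - c i) := by
    have : ∀ k, c k * z k = c k * y k + ε * (c k * w k) := by
      intro k; simp [hzdef]; ring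
    rw [Finset.sum_congr rfl (fun k _ => this k), Finset.sum_add_distrib, ← Finset.mul_sum,
      hwcsum]
  rw [hzc] at hle
  have hneg : ε * (c j - c i) < 0 := mul_neg_of_pos_of_neg hεpos (by linarith)
  linarith
end

section
/- The relaxed hanging chain problem has at most one optimal solution. -/
lemma sqrt_mid_le (L a b : ℝ) (ha : |a| ≤ L) (hb : |b| ≤ L) :
    (Real.sqrt (L^2 - a^2) + Real.sqrt (L^2 - b^2))/2
      ≤ Real.sqrt (L^2 - ((a+b)/2)^2) := by
  have ha' := abs_le.mp ha
  have hb' := abs_le.mp hb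
  have h1 : 0 ≤ L^2 - a^2 := by nlinarith
  have h2 : 0 ≤ L^2 - b^2 := by nlinarith
  have h3 : 0 ≤ L^2 - ((a+b)/2)^2 := by nlinarith
  set sa := Real.sqrt (L^2 - a^2) with hsa
  set sb := Real.sqrt (L^2 - b^2) with hsb
  set sm := Real.sqrt (L^2 - ((a+b)/2)^2) with hsm
  have ea : sa^2 = L^2 - a^2 := Real.sq_sqrt h1
  have eb : sb^2 = L^2 - b^2 := Real.sq_sqrt h2
  have em : sm^2 = L^2 - ((a+b)/2)^2 := Real.sq_sqrt h3
  have na : 0 ≤ sa := Real.sqrt_nonneg _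
  have nb : 0 ≤ sb := Real.sqrt_nonneg _
  have nm : 0 ≤ sm := Real.sqrt_nonneg _
  nlinarith [sq_nonneg (sa - sb), sq_nonneg (a - b), sq_nonneg (sa + sb - 2*sm)]

lemma sqrt_mid_lt (L a b : ℝ) (ha : |a| ≤ L) (hb : |b| ≤ L) (hab : a ≠ b) :
    (Real.sqrt (L^2 - a^2) + Real.sqrt (L^2 - b^2))/2
      < Real.sqrt (L^2 - ((a+b)/2)^2) := by
  have ha' := abs_le.mp ha
  have hb' := abs_le.mp hb
  have h1 : 0 ≤ L^2 - a^2 := by nlinarith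
  have h2 : 0 ≤ L^2 - b^2 := by nlinarith
  have h3 : 0 ≤ L^2 - ((a+b)/2)^2 := by nlinarith
  have hab0 : a - b ≠ 0 := sub_ne_zero.mpr hab
  have hab' : 0 < (a-b)^2 := by positivity
  set sa := Real.sqrt (L^2 - a^2) with hsa
  set sb := Real.sqrt (L^2 - b^2) with hsb
  set sm := Real.sqrt (L^2 - ((a+b)/2)^2) with hsm
  have ea : sa^2 = L^2 - a^2 := Real.sq_sqrt h1
  have eb : sb^2 = L^2 - b^2 := Real.sq_sqrt h2
  have em : sm^2 = L^2 - ((a+b)/2)^2 := Real.sq_sqrt h3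
  have na : 0 ≤ sa := Real.sqrt_nonneg _
  have nb : 0 ≤ sb := Real.sqrt_nonneg _
  have nm : 0 ≤ sm := Real.sqrt_nonneg _
  nlinarith [sq_nonneg (sa - sb), sq_nonneg (sa + sb - 2*sm), sq_nonneg (sa+sb)]

theorem relaxed_at_most_one_optimum (n : ℕ) (hn : 2 ≤ n) (m ℓ : Fin n → ℝ)
    (hm : ∀ i, 0 < m i) (hℓ : ∀ i, 0 < ℓ i) (d : ℝ)
    (hd₁ : ∀ i, ℓ i < d) (hd₂ : d < ∑ i, ℓ i) (c : Fin n → ℝ)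
    (hc : ∀ i, c i = m i / 2 + ∑ j ∈ Finset.univ.filter (fun j => i < j), m j)
    (y z : Fin n → ℝ)
    (hy₁ : (∑ i, y i) = 0) (hy₂ : ∀ i, |y i| ≤ ℓ i)
    (hy₃ : d ≤ ∑ i, Real.sqrt (ℓ i ^ 2 - y i ^ 2))
    (hz₁ : (∑ i, z i) = 0) (hz₂ : ∀ i, |z i| ≤ ℓ i)
    (hz₃ : d ≤ ∑ i, Real.sqrt (ℓ i ^ 2 - z i ^ 2))
    (hyopt : ∀ w : Fin n → ℝ, (∑ i, w i) = 0 → (∀ i, |w i| ≤ ℓ i) →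
      d ≤ (∑ i, Real.sqrt (ℓ i ^ 2 - w i ^ 2)) →
      (∑ i, c i * y i) ≤ ∑ i, c i * w i)
    (hzopt : ∀ w : Fin n → ℝ, (∑ i, w i) = 0 → (∀ i, |w i| ≤ ℓ i) →
      d ≤ (∑ i, Real.sqrt (ℓ i ^ 2 - w i ^ 2)) →
      (∑ i, c i * z i) ≤ ∑ i, c i * w i) :
    y = z := by
  by_contra hne
  obtain ⟨k, hk⟩ : ∃ k, y k ≠ z k := by
    by_contra h; push_neg at h; exact hne (funext h)
  set w : Fin n → ℝ := fun t => (y t + z t)/2 with hwdef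
  -- same objective value
  have hVyz : (∑ i, c i * y i) = ∑ i, c i * z i :=
    le_antisymm (hyopt z hz₁ hz₂ hz₃) (hzopt y hy₁ hy₂ hy₃)
  -- w feasible
  have hw₁ : (∑ i, w i) = 0 := by
    have : (∑ i, w i) = ((∑ i, y i) + ∑ i, z i)/2 := by
      rw [← Finset.sum_add_distrib, ← Finset.sum_div]
    rw [this, hy₁, hz₁]; norm_num
  have hw₂ : ∀ i, |w i| ≤ ℓ i := by
    intro i
    have := abs_add_le (y i) (z i)
    have h1 := hy₂ i; have h2 := hz₂ i
    have : |w i| = |y i + z i|/2 := by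
      rw [hwdef]; simp [abs_div]
    rw [this]
    have := abs_add_le (y i) (z i)
    linarith
  -- strict slack in spanning constraint
  have hS : d < ∑ i, Real.sqrt (ℓ i ^ 2 - w i ^ 2) := by
    have hterm : ∀ i ∈ Finset.univ,
        (Real.sqrt (ℓ i ^2 - y i ^2) + Real.sqrt (ℓ i ^2 - z i ^2))/2
          ≤ Real.sqrt (ℓ i ^ 2 - w i ^ 2) :=
      fun i _ => sqrt_mid_le (ℓ i) (y i) (z i) (hy₂ i) (hz₂ i)
    have hlt : (∑ i, (Real.sqrt (ℓ i ^2 - y i ^2) + Real.sqrt (ℓ i ^2 - z i ^2))/2)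
        < ∑ i, Real.sqrt (ℓ i ^ 2 - w i ^ 2) :=
      Finset.sum_lt_sum hterm
        ⟨k, Finset.mem_univ k, sqrt_mid_lt (ℓ k) (y k) (z k) (hy₂ k) (hz₂ k) hk⟩
    have heq : (∑ i, (Real.sqrt (ℓ i ^2 - y i ^2) + Real.sqrt (ℓ i ^2 - z i ^2))/2)
        = ((∑ i, Real.sqrt (ℓ i ^2 - y i ^2)) + ∑ i, Real.sqrt (ℓ i ^2 - z i ^2))/2 := by
      rw [← Finset.sum_add_distrib, ← Finset.sum_div]
    rw [heq] at hlt
    linarith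
  -- interiority at k
  have hwk : |w k| < ℓ k := by
    have hpos : 0 < Real.sqrt (ℓ k ^ 2 - w k ^ 2) := by
      have h := sqrt_mid_lt (ℓ k) (y k) (z k) (hy₂ k) (hz₂ k) hk
      have := Real.sqrt_nonneg (ℓ k ^2 - y k ^2)
      have := Real.sqrt_nonneg (ℓ k ^2 - z k ^2)
      linarith
    have h2 : 0 < ℓ k ^ 2 - w k ^ 2 := Real.sqrt_pos.mp hpos
    have := hℓ k
    nlinarith [sq_abs (w k), abs_nonneg (w k)]
  have hwk' := abs_lt.mp hwk
  -- existence of a perturbable pair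
  obtain ⟨i, j, hij, hi, hj⟩ : ∃ i j, i < j ∧ -ℓ i < w i ∧ w j < ℓ j := by
    by_contra hnp
    push_neg at hnp
    have hgt : ∀ t, k < t → w t = ℓ t :=
      fun t ht => le_antisymm ((abs_le.mp (hw₂ t)).2) (hnp k t ht hwk'.1)
    have hltk : ∀ t, t < k → w t = -ℓ t := by
      intro t ht
      refine le_antisymm ?_ ((abs_le.mp (hw₂ t)).1)
      by_contra h
      push_neg at h
      exact absurd (hnp t k ht h) (not_le.mpr hwk'.2)
    have hb : (∑ t, Real.sqrt (ℓ t ^ 2 - w t ^ 2)) ≤ ℓ k := by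
      have : ∀ t ∈ Finset.univ,
          Real.sqrt (ℓ t ^ 2 - w t ^ 2) ≤ if t = k then ℓ k else 0 := by
        intro t _
        rcases lt_trichotomy t k with h | h | h
        · simp [ne_of_lt h, hltk t h]
        · subst h
          simp only [if_pos rfl]
          have : Real.sqrt (ℓ t ^ 2 - w t ^ 2) ≤ Real.sqrt (ℓ t ^ 2) :=
            Real.sqrt_le_sqrt (by nlinarith [sq_nonneg (w t)])
          rwa [Real.sqrt_sq (hℓ t).le] at this
        · simp [ne_of_gt h, hgt t h]
      calc (∑ t, Real.sqrt (ℓ t ^ 2 - w t ^ 2)) ≤ ∑ t, if t = k then ℓ k else 0 :=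
            Finset.sum_le_sum this
        _ = ℓ k := by simp
    have := hd₁ k
    linarith
  -- c is strictly decreasing
  have hcij : c j < c i := by
    have hsplit : (∑ t ∈ Finset.univ.filter (fun t => i < t), m t)
        = (∑ t ∈ Finset.univ.filter (fun t => j < t), m t)
          + ∑ t ∈ (Finset.univ.filter (fun t => i < t)).filter (fun t => ¬ j < t), m t := by
      rw [← Finset.sum_filter_add_sum_filter_not (Finset.univ.filter (fun t => i < t))
        (fun t => j < t)]
      congr 1
      · congr 1
        ext t
        simp only [Finset.mem_filter, Finset.mem_univ, true_and]
        exact ⟨fun h => h.2, fun h => ⟨lt_trans hij h, h⟩⟩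
    have hjmem : j ∈ (Finset.univ.filter (fun t => i < t)).filter (fun t => ¬ j < t) := by
      simp [hij]
    have hmj : m j ≤ ∑ t ∈ (Finset.univ.filter (fun t => i < t)).filter (fun t => ¬ j < t), m t :=
      Finset.single_le_sum (fun t _ => (hm t).le) hjmem
    have := hm i; have := hm j
    rw [hc i, hc j]
    rw [hsplit]
    linarith
  -- perturbation direction
  set v : Fin n → ℝ := fun t => (if t = j then (1:ℝ) else 0) + (if t = i then (-1:ℝ) else 0)
    with hvdef
  have hij' : i ≠ j := ne_of_lt hij
  have hv0 : (∑ t, v t) = 0 := by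
    rw [hvdef]
    rw [Finset.sum_add_distrib]
    simp
  have hvc : (∑ t, c t * v t) = c j - c i := by
    rw [hvdef]
    simp only [mul_add, Finset.sum_add_distrib, mul_ite, mul_one, mul_zero, mul_neg]
    rw [Finset.sum_ite_eq' Finset.univ j c]
    rw [Finset.sum_ite_eq' Finset.univ i (fun t => -c t)]
    simp
    ring
  -- continuity argument
  set g : ℝ → ℝ := fun ε => ∑ t, Real.sqrt (ℓ t ^ 2 - (w t + ε * v t) ^ 2) with hgdef
  have hgc : Continuous g := by
    apply continuous_finset_sum
    intro t _
    exact (continuous_const.sub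
      ((continuous_const.add (continuous_id.mul continuous_const)).pow 2)).sqrt
  have hg0 : d < g 0 := by
    simpa [hgdef] using hS
  have h1 : ∀ᶠ ε in nhds (0:ℝ), d < g ε :=
    (isOpen_lt continuous_const hgc).mem_nhds hg0
  have h2 : ∀ᶠ ε in nhds (0:ℝ), ε < w i + ℓ i := by
    apply Filter.Tendsto.eventually_lt_const (by linarith : (0:ℝ) < w i + ℓ i)
    exact Filter.tendsto_id
  have h3 : ∀ᶠ ε in nhds (0:ℝ), ε < ℓ j - w j := by
    apply Filter.Tendsto.eventually_lt_const (by linarith : (0:ℝ) < ℓ j - w j)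
    exact Filter.tendsto_id
  have h0 : ∀ᶠ ε in nhdsWithin (0:ℝ) (Set.Ioi 0), (0:ℝ) < ε :=
    eventually_mem_nhdsWithin
  obtain ⟨ε, hεg, hεi, hεj, hε0⟩ :
      ∃ ε, (d < g ε) ∧ (ε < w i + ℓ i) ∧ (ε < ℓ j - w j) ∧ (0 < ε) :=
    (((h1.filter_mono nhdsWithin_le_nhds).and
      ((h2.filter_mono nhdsWithin_le_nhds).and
        ((h3.filter_mono nhdsWithin_le_nhds).and h0)))).exists
  have hvj : v j = 1 := by simp [hvdef, hij'.symm]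
  have hvi : v i = -1 := by simp [hvdef, hij']
  have hvo : ∀ t, t ≠ i → t ≠ j → v t = 0 := by
    intro t ht1 ht2; simp [hvdef, ht1, ht2]
  have hcw : (∑ t, c t * w t) = ∑ t, c t * y t := by
    calc (∑ t, c t * w t) = ∑ t, (c t * y t + c t * z t)/2 :=
          Finset.sum_congr rfl (fun t _ => by rw [hwdef]; ring)
      _ = ((∑ t, c t * y t) + ∑ t, c t * z t)/2 := by
          rw [← Finset.sum_div, Finset.sum_add_distrib]
      _ = ∑ t, c t * y t := by rw [← hVyz]; ring
  have hcw' : (∑ t, c t * (w t + ε * v t)) = (∑ t, c t * w t) + ε * (c j - c i) := by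
    rw [← hvc]
    simp only [mul_add, Finset.sum_add_distrib]
    rw [Finset.mul_sum]
    congr 1
    exact Finset.sum_congr rfl (fun t _ => by ring)
  have key : (∑ t, c t * y t) ≤ ∑ t, c t * (w t + ε * v t) := by
    apply hyopt
    · rw [Finset.sum_add_distrib, ← Finset.mul_sum, hv0, hw₁]; ring
    · intro t
      rcases eq_or_ne t i with rfl | hti
      · rw [hvi, abs_le]
        have := abs_le.mp (hw₂ t)
        constructor <;> [linarith; nlinarith]
      · rcases eq_or_ne t j with rfl | htj
        · rw [hvj, abs_le]
          have := abs_le.mp (hw₂ t)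
          constructor <;> [nlinarith; linarith]
        · rw [hvo t hti htj]
          simpa using hw₂ t
    · exact le_of_lt (by simpa [hgdef] using hεg)
  rw [hcw', hcw] at key
  have : ε * (c j - c i) < 0 := mul_neg_of_pos_of_neg hε0 (by linarith)
  linarith
end
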